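/- Let K : [0,1] × ℝ → ℝ be continuous and 1-periodic in its second variable (K(x₁, x₂+1) = K(x₁, x₂) for all x₁ ∈ [0,1], x₂ ∈ ℝ), and suppose ∫₀¹∫₀¹ K(x₁,x₂) dx₂ dx₁ = 0. Let g ∈ C¹([0,1]) with g(0) = 1 and g(1) = 0. Then lim_{L→∞} ∫₀¹ ∫₀^L g(x₂/L) K(x₁,x₂) dx₂ dx₁ = − ∫₀¹ ∫₀¹ x₂ K(x₁,x₂) dx₂ dx₁. In particular the limit is independent of the choice of g. -/

import Mathlib

open MeasureTheory Filter Set intervalIntegral Topology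

open MeasureTheory Filter Set intervalIntegral

lemma aux_periodic_bound {f : ℝ → ℝ} (hf : Continuous f) (hp : Function.Periodic f 1) :
    ∃ M : ℝ, 0 ≤ M ∧ ∀ t, |f t| ≤ M := by
  obtain ⟨M, hM⟩ := (isCompact_Icc (a := (0:ℝ)) (b := 1)).exists_bound_of_continuousOn
    hf.continuousOn
  refine ⟨max M 0, le_max_right _ _, fun t => ?_⟩
  have h1 : f t = f (Int.fract t) := by
    have h := hp.sub_int_mul_eq (x := t) (n := ⌊t⌋)
    rw [mul_one] at h
    exact h.symm
  rw [h1]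
  exact le_trans (hM _ ⟨(Int.fract_nonneg t), (Int.fract_lt_one t).le⟩) (le_max_left _ _)

lemma aux_swap_rect {f : ℝ × ℝ → ℝ} (hf : Continuous f) {b d : ℝ} (hb : 0 ≤ b) (hd : 0 ≤ d) :
    ∫ x in (0:ℝ)..b, ∫ y in (0:ℝ)..d, f (x, y) = ∫ y in (0:ℝ)..d, ∫ x in (0:ℝ)..b, f (x, y) := by
  have hint : Integrable (Function.uncurry fun x y => f (x, y))
      ((volume.restrict (Ioc 0 b)).prod (volume.restrict (Ioc 0 d))) := by
    rw [Measure.prod_restrict]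
    have h1 : IntegrableOn f (Icc (0:ℝ) b ×ˢ Icc (0:ℝ) d) volume :=
      hf.continuousOn.integrableOn_compact (isCompact_Icc.prod isCompact_Icc)
    have h2 := h1.mono_set (Set.prod_mono Ioc_subset_Icc_self Ioc_subset_Icc_self)
    rw [Measure.volume_eq_prod] at h2
    exact h2
  have := MeasureTheory.integral_integral_swap hint
  simp only [intervalIntegral.integral_of_le hb, intervalIntegral.integral_of_le hd]
  exact this


variable {P : ℝ → ℝ}

lemma aux_antideriv_hasDerivAt (hP : Continuous P) (t : ℝ) :
    HasDerivAt (fun u => ∫ s in (0:ℝ)..u, P s) (P t) t :=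
  intervalIntegral.integral_hasDerivAt_right (hP.intervalIntegrable _ _)
    (hP.stronglyMeasurableAtFilter _ _) hP.continuousAt

lemma aux_antideriv_periodic (hP : Continuous P) (hper : Function.Periodic P 1)
    (hmean : (∫ t in (0:ℝ)..1, P t) = 0) :
    Function.Periodic (fun u => ∫ s in (0:ℝ)..u, P s) 1 := by
  intro t
  have h1 : (∫ s in (0:ℝ)..(t+1), P s) = (∫ s in (0:ℝ)..t, P s) + ∫ s in t..(t+1), P s :=
    (intervalIntegral.integral_add_adjacent_intervals (hP.intervalIntegrable _ _)
      (hP.intervalIntegrable _ _)).symm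
  have h2 : (∫ s in t..(t+1), P s) = ∫ s in (0:ℝ)..(0+1), P s :=
    hper.intervalIntegral_add_eq t 0
  simp only [h1, h2, zero_add, hmean, add_zero]

lemma aux_weak_zero (hP : Continuous P) (hper : Function.Periodic P 1)
    (hmean : (∫ t in (0:ℝ)..1, P t) = 0) {f : ℝ → ℝ} (hf : ContinuousOn f (Icc 0 1)) :
    Tendsto (fun L : ℝ => ∫ u in (0:ℝ)..1, f u * P (L * u)) atTop (𝓝 0) := by
  set Q : ℝ → ℝ := fun u => ∫ s in (0:ℝ)..u, P s with hQdef
  have hQd : ∀ t, HasDerivAt Q (P t) t := aux_antideriv_hasDerivAt hP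
  have hQc : Continuous Q := continuous_iff_continuousAt.2 fun t => (hQd t).continuousAt
  have hQper := aux_antideriv_periodic hP hper hmean
  have hQ0 : Q 0 = 0 := intervalIntegral.integral_same
  obtain ⟨MQ, hMQ0, hMQ⟩ := aux_periodic_bound hQc hQper
  obtain ⟨MP, hMP0, hMP⟩ := aux_periodic_bound hP hper
  rw [NormedAddCommGroup.tendsto_nhds_zero]
  intro ε hε
  have hε' : 0 < ε / (2 * (MP + 1)) := by positivity
  obtain ⟨p, hp⟩ := exists_polynomial_near_of_continuousOn 0 1 f hf _ hε'
  obtain ⟨C, hC⟩ := (isCompact_Icc (a := (0:ℝ)) (b := 1)).exists_bound_of_continuousOn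
      (p.derivative.continuous_aeval).continuousOn
  set C' := max C 0 with hC'def
  set D := |Polynomial.eval 1 p| * MQ + C' * MQ with hDdef
  have hD0 : 0 ≤ D := by positivity
  have h2 : ∀ᶠ L : ℝ in atTop, D / L < ε / 2 := by
    have ht : Tendsto (fun L : ℝ => D / L) atTop (𝓝 0) :=
      tendsto_const_nhds.div_atTop tendsto_id
    exact ht.eventually_lt_const (by positivity)
  filter_upwards [h2, eventually_gt_atTop (0:ℝ)] with L hL2 hL0
  -- integrability facts
  have hPL : Continuous fun u => P (L * u) := hP.comp (continuous_const.mul continuous_id)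
  have hfc : ContinuousOn (fun u => f u * P (L * u)) (uIcc (0:ℝ) 1) := by
    rw [uIcc_of_le zero_le_one]; exact hf.mul hPL.continuousOn
  have int1 : IntervalIntegrable (fun u => f u * P (L * u)) volume 0 1 :=
    hfc.intervalIntegrable
  have int2 : IntervalIntegrable (fun u => Polynomial.eval u p * P (L * u)) volume 0 1 :=
    ((p.continuous_aeval).mul hPL).intervalIntegrable _ _
  -- IBP for the polynomial part
  have ibp : (∫ u in (0:ℝ)..1, Polynomial.eval u p * (L * P (L * u)))
      = Polynomial.eval 1 p * Q (L * 1) - Polynomial.eval 0 p * Q (L * 0)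
        - ∫ u in (0:ℝ)..1, Polynomial.eval u (p.derivative) * Q (L * u) := by
    apply intervalIntegral.integral_mul_deriv_eq_deriv_mul_of_hasDerivAt
      (u := fun x => Polynomial.eval x p) (u' := fun x => Polynomial.eval x p.derivative)
      (v := fun x => Q (L * x)) (v' := fun x => L * P (L * x))
    · exact (p.continuous_aeval).continuousOn
    · exact (hQc.comp (continuous_const.mul continuous_id)).continuousOn
    · intro x _; exact p.hasDerivAt x
    · intro x _
      have h := (hQd (L * x)).comp x ((hasDerivAt_id x).const_mul L)
      simpa [mul_comm, Function.comp_def] using h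
    · exact (p.derivative.continuous_aeval).intervalIntegrable _ _
    · exact (continuous_const.mul hPL).intervalIntegrable _ _
  -- bound for the polynomial part
  have hQLbound : ∀ x ∈ Set.uIoc (0:ℝ) 1, ‖Polynomial.eval x p.derivative * Q (L * x)‖ ≤ C' * MQ := by
    intro x hx
    have hx' : x ∈ Icc (0:ℝ) 1 :=
      Ioc_subset_Icc_self (by simpa [uIoc_of_le zero_le_one] using hx)
    rw [Real.norm_eq_abs, abs_mul]
    have h5 : |Polynomial.eval x p.derivative| ≤ C' := by
      refine le_trans ?_ (le_max_left C 0)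
      simpa using hC x hx'
    exact mul_le_mul h5 (hMQ _) (abs_nonneg _) (le_trans (abs_nonneg _) h5)
  have hpoly : |∫ u in (0:ℝ)..1, Polynomial.eval u p * P (L * u)| ≤ D / L := by
    have h3 : (∫ u in (0:ℝ)..1, Polynomial.eval u p * (L * P (L * u)))
        = L * ∫ u in (0:ℝ)..1, Polynomial.eval u p * P (L * u) := by
      rw [← intervalIntegral.integral_const_mul]
      congr 1; ext u; ring
    rw [ibp] at h3
    have b1 : |∫ u in (0:ℝ)..1, Polynomial.eval u p.derivative * Q (L * u)| ≤ C' * MQ := by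
      have := intervalIntegral.norm_integral_le_of_norm_le_const hQLbound
      simpa using this
    have h4 : |Polynomial.eval 1 p * Q (L * 1) - Polynomial.eval 0 p * Q (L * 0)
        - ∫ u in (0:ℝ)..1, Polynomial.eval u p.derivative * Q (L * u)| ≤ D := by
      have e0 : Q (L * 0) = 0 := by rw [mul_zero, hQ0]
      rw [e0, mul_zero, sub_zero]
      refine le_trans (abs_sub _ _) (add_le_add ?_ b1)
      rw [abs_mul]
      exact mul_le_mul_of_nonneg_left (hMQ _) (abs_nonneg _)
    have h6 : (∫ u in (0:ℝ)..1, Polynomial.eval u p * P (L * u))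
        = (Polynomial.eval 1 p * Q (L * 1) - Polynomial.eval 0 p * Q (L * 0)
          - ∫ u in (0:ℝ)..1, Polynomial.eval u p.derivative * Q (L * u)) / L := by
      rw [eq_div_iff hL0.ne']
      linarith [h3]
    rw [h6, abs_div, abs_of_pos hL0]
    exact div_le_div_of_nonneg_right h4 hL0.le
  have hdiff : |∫ u in (0:ℝ)..1, (f u - Polynomial.eval u p) * P (L * u)|
      ≤ ε / (2 * (MP + 1)) * MP := by
    have hb : ∀ x ∈ Set.uIoc (0:ℝ) 1, ‖(f x - Polynomial.eval x p) * P (L * x)‖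
        ≤ ε / (2 * (MP + 1)) * MP := by
      intro x hx
      have hx' : x ∈ Icc (0:ℝ) 1 :=
        Ioc_subset_Icc_self (by simpa [uIoc_of_le zero_le_one] using hx)
      rw [Real.norm_eq_abs, abs_mul]
      have h7 : |f x - Polynomial.eval x p| ≤ ε / (2 * (MP + 1)) := by
        rw [abs_sub_comm]; exact (hp x hx').le
      exact mul_le_mul h7 (hMP _) (abs_nonneg _) hε'.le
    have := intervalIntegral.norm_integral_le_of_norm_le_const hb
    simpa using this
  have hsplit : (∫ u in (0:ℝ)..1, f u * P (L * u))
      = (∫ u in (0:ℝ)..1, (f u - Polynomial.eval u p) * P (L * u))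
        + ∫ u in (0:ℝ)..1, Polynomial.eval u p * P (L * u) := by
    have hsub := intervalIntegral.integral_sub int1 int2
    have heq : (∫ u in (0:ℝ)..1, (f u - Polynomial.eval u p) * P (L * u))
        = (∫ u in (0:ℝ)..1, f u * P (L * u))
          - ∫ u in (0:ℝ)..1, Polynomial.eval u p * P (L * u) := by
      rw [← hsub]; congr 1; ext u; ring
    linarith [heq]
  have hhalf : ε / (2 * (MP + 1)) * MP ≤ ε / 2 := by
    rw [div_mul_eq_mul_div, div_le_div_iff₀ (by positivity) two_pos]
    nlinarith [hε.le, hMP0]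
  rw [Real.norm_eq_abs, hsplit]
  calc |(∫ u in (0:ℝ)..1, (f u - Polynomial.eval u p) * P (L * u))
      + ∫ u in (0:ℝ)..1, Polynomial.eval u p * P (L * u)|
      ≤ |∫ u in (0:ℝ)..1, (f u - Polynomial.eval u p) * P (L * u)|
        + |∫ u in (0:ℝ)..1, Polynomial.eval u p * P (L * u)| := abs_add_le _ _
    _ ≤ ε / (2 * (MP + 1)) * MP + D / L := add_le_add hdiff hpoly
    _ < ε / 2 + ε / 2 := add_lt_add_of_le_of_lt hhalf hL2
    _ = ε := add_halves ε

lemma aux_core {H : ℝ → ℝ} (hH : Continuous H) (hper : Function.Periodic H 1)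
    (hmean : (∫ t in (0:ℝ)..1, H t) = 0)
    {g : ℝ → ℝ} (hg : ContDiffOn ℝ 1 g (Icc 0 1)) (hg0 : g 0 = 1) (hg1 : g 1 = 0) :
    Tendsto (fun L : ℝ => ∫ t in (0:ℝ)..L, g (t / L) * H t) atTop
      (𝓝 (-(∫ t in (0:ℝ)..1, t * H t))) := by
  set Q : ℝ → ℝ := fun u => ∫ s in (0:ℝ)..u, H s with hQdef
  have hQd : ∀ t, HasDerivAt Q (H t) t := aux_antideriv_hasDerivAt hH
  have hQc : Continuous Q := continuous_iff_continuousAt.2 fun t => (hQd t).continuousAt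
  have hQper : Function.Periodic Q 1 := aux_antideriv_periodic hH hper hmean
  have hQ0 : Q 0 = 0 := intervalIntegral.integral_same
  have hQ1 : Q 1 = 0 := hmean
  set φ : ℝ → ℝ := fun u => derivWithin g (Icc 0 1) u with hφdef
  have hφc : ContinuousOn φ (Icc 0 1) :=
    hg.continuousOn_derivWithin (uniqueDiffOn_Icc zero_lt_one) le_rfl
  have hφint : IntervalIntegrable φ volume 0 1 := by
    apply ContinuousOn.intervalIntegrable
    rwa [uIcc_of_le zero_le_one]
  have hgderiv : ∀ u ∈ Ioo (0:ℝ) 1, HasDerivAt g (φ u) u := by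
    intro u hu
    have hmem : Icc (0:ℝ) 1 ∈ 𝓝 u := Icc_mem_nhds hu.1 hu.2
    have hd : DifferentiableAt ℝ g u :=
      ((hg.differentiableOn one_ne_zero) u (Ioo_subset_Icc_self hu)).differentiableAt hmem
    have heq : φ u = deriv g u := derivWithin_of_mem_nhds hmem
    rw [heq]
    exact hd.hasDerivAt
  set Qbar := ∫ u in (0:ℝ)..1, Q u with hQbardef
  -- the limit value is Qbar
  have hval : -(∫ t in (0:ℝ)..1, t * H t) = Qbar := by
    have ibp0 : (∫ x in (0:ℝ)..1, x * H x)
        = 1 * Q 1 - 0 * Q 0 - ∫ x in (0:ℝ)..1, 1 * Q x := by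
      apply intervalIntegral.integral_mul_deriv_eq_deriv_mul_of_hasDerivAt
        (u := fun x => x) (u' := fun _ => (1:ℝ)) (v := Q) (v' := H)
      · exact continuous_id.continuousOn
      · exact hQc.continuousOn
      · intro x _; exact hasDerivAt_id x
      · intro x _; exact hQd x
      · exact intervalIntegrable_const
      · exact hH.intervalIntegrable _ _
    have h1 : (∫ x in (0:ℝ)..1, (1:ℝ) * Q x) = Qbar := by
      rw [hQbardef]; congr 1; ext x; rw [one_mul]
    rw [ibp0, h1, hQ1, hQ0]
    ring
  -- key identity for positive L
  have key : ∀ L : ℝ, 0 < L → (∫ t in (0:ℝ)..L, g (t / L) * H t)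
      = -∫ u in (0:ℝ)..1, φ u * Q (L * u) := by
    intro L hL
    have sub1 : L * (∫ u in (0:ℝ)..1, g ((L * u) / L) * H (L * u))
        = ∫ t in (0:ℝ)..L, g (t / L) * H t := by
      have := intervalIntegral.mul_integral_comp_mul_left (a := (0:ℝ)) (b := 1) (c := L)
        (f := fun t => g (t / L) * H t)
      simpa using this
    have sub2 : (∫ u in (0:ℝ)..1, g ((L * u) / L) * H (L * u))
        = ∫ u in (0:ℝ)..1, g u * H (L * u) := by
      congr 1; ext u; rw [mul_comm L u, mul_div_assoc, div_self hL.ne', mul_one]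
    have ibp : (∫ u in (0:ℝ)..1, g u * (L * H (L * u)))
        = g 1 * Q (L * 1) - g 0 * Q (L * 0) - ∫ u in (0:ℝ)..1, φ u * Q (L * u) := by
      apply intervalIntegral.integral_mul_deriv_eq_deriv_mul_of_hasDerivAt
        (u := g) (u' := φ) (v := fun x => Q (L * x)) (v' := fun x => L * H (L * x))
      · rw [uIcc_of_le zero_le_one]; exact hg.continuousOn
      · exact (hQc.comp (continuous_const.mul continuous_id)).continuousOn
      · intro x hx; exact hgderiv x (by simpa using hx)
      · intro x _
        have h := (hQd (L * x)).comp x ((hasDerivAt_id x).const_mul L)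
        simpa [mul_comm, Function.comp_def] using h
      · exact hφint
      · exact (continuous_const.mul
          (hH.comp (continuous_const.mul continuous_id))).intervalIntegrable _ _
    have hL1 : (∫ u in (0:ℝ)..1, g u * (L * H (L * u)))
        = L * ∫ u in (0:ℝ)..1, g u * H (L * u) := by
      rw [← intervalIntegral.integral_const_mul]; congr 1; ext u; ring
    rw [← sub1, sub2, ← hL1, ibp, hg1, hg0, mul_zero, hQ0, mul_zero]
    ring
  -- the weak limit
  have hPper : Function.Periodic (fun t => Q t - Qbar) 1 := by
    intro t; simp only [sub_left_inj]; exact hQper t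
  have hPmean : (∫ t in (0:ℝ)..1, (Q t - Qbar)) = 0 := by
    rw [intervalIntegral.integral_sub (hQc.intervalIntegrable _ _) intervalIntegrable_const]
    simp [hQbardef]
  have hweak := aux_weak_zero (hQc.sub continuous_const) hPper hPmean hφc
  -- rewrite the approximating family
  have hdecomp : ∀ L : ℝ, -(∫ u in (0:ℝ)..1, φ u * Q (L * u))
      = -(∫ u in (0:ℝ)..1, φ u * (Q (L * u) - Qbar)) + Qbar := by
    intro L
    have hi1 : IntervalIntegrable (fun u => φ u * (Q (L * u) - Qbar)) volume 0 1 := by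
      apply ContinuousOn.intervalIntegrable
      rw [uIcc_of_le zero_le_one]
      exact hφc.mul (((hQc.comp (continuous_const.mul continuous_id)).sub
        continuous_const).continuousOn)
    have hi2 : IntervalIntegrable (fun u => φ u * Qbar) volume 0 1 :=
      hφint.mul_const _
    have hsum : (∫ u in (0:ℝ)..1, φ u * Q (L * u))
        = (∫ u in (0:ℝ)..1, φ u * (Q (L * u) - Qbar)) + ∫ u in (0:ℝ)..1, φ u * Qbar := by
      rw [← intervalIntegral.integral_add hi1 hi2]
      congr 1; ext u; ring
    have hc : (∫ u in (0:ℝ)..1, φ u * Qbar) = -Qbar := by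
      rw [intervalIntegral.integral_mul_const]
      have hφval : (∫ u in (0:ℝ)..1, φ u) = g 1 - g 0 :=
        intervalIntegral.integral_eq_sub_of_hasDeriv_right_of_le zero_le_one hg.continuousOn
          (fun x hx => (hgderiv x hx).hasDerivWithinAt) hφint
      rw [hφval, hg1, hg0]; ring
    rw [hsum, hc]; ring
  have hlim : Tendsto (fun L : ℝ => -∫ u in (0:ℝ)..1, φ u * Q (L * u)) atTop (𝓝 Qbar) := by
    have h := (hweak.neg).add_const Qbar
    simp only [neg_zero, zero_add] at h
    apply h.congr
    intro L
    exact (hdecomp L).symm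
  rw [hval]
  apply hlim.congr'
  filter_upwards [eventually_gt_atTop (0:ℝ)] with L hL
  exact (key L hL).symm


/-- **Independence of the edge-current regularization from the cutoff.**
If `K : [0,1] × ℝ → ℝ` is continuous, `1`-periodic in its second variable, and has vanishing
average over the unit cell `[0,1] × [0,1]`, and if `g ∈ C¹([0,1])` with `g 0 = 1`, `g 1 = 0`,
then `∫₀¹ ∫₀ᴸ g(x₂/L) K(x₁,x₂) dx₂ dx₁ → − ∫₀¹ ∫₀¹ x₂ K(x₁,x₂) dx₂ dx₁` as `L → ∞`. -/
theorem edge_current_cutoff_independence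
    (K : ℝ × ℝ → ℝ)
    (hKcont : ContinuousOn K ((Set.Icc (0:ℝ) 1) ×ˢ (Set.univ : Set ℝ)))
    (hKper : ∀ x₁ ∈ Set.Icc (0:ℝ) 1, ∀ x₂ : ℝ, K (x₁, x₂ + 1) = K (x₁, x₂))
    (hKavg : (∫ x₁ in (0:ℝ)..1, ∫ x₂ in (0:ℝ)..1, K (x₁, x₂)) = 0)
    (g : ℝ → ℝ) (hg : ContDiffOn ℝ 1 g (Set.Icc (0:ℝ) 1))
    (hg0 : g 0 = 1) (hg1 : g 1 = 0) :
    Tendsto (fun L : ℝ => ∫ x₁ in (0:ℝ)..1, ∫ x₂ in (0:ℝ)..L, g (x₂ / L) * K (x₁, x₂))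
      atTop (nhds (-(∫ x₁ in (0:ℝ)..1, ∫ x₂ in (0:ℝ)..1, x₂ * K (x₁, x₂)))) := by
  -- extend `K` and `g` by projection onto `[0,1]`
  set pr : ℝ → ℝ := fun x => ↑(projIcc (0:ℝ) 1 zero_le_one x) with hprdef
  have hprc : Continuous pr := continuous_subtype_val.comp continuous_projIcc
  have hprmem : ∀ x, pr x ∈ Icc (0:ℝ) 1 := fun x => (projIcc (0:ℝ) 1 zero_le_one x).2
  have hpreq : ∀ x ∈ Icc (0:ℝ) 1, pr x = x := fun x hx => by
    simp [hprdef, projIcc_of_mem zero_le_one hx]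
  set K' : ℝ × ℝ → ℝ := fun q => K (pr q.1, q.2) with hK'def
  have hK'c : Continuous K' :=
    hKcont.comp_continuous ((hprc.comp continuous_fst).prodMk continuous_snd)
      fun q => ⟨hprmem q.1, mem_univ _⟩
  have hK'eq : ∀ x₁ ∈ Icc (0:ℝ) 1, ∀ x₂, K' (x₁, x₂) = K (x₁, x₂) := by
    intro x₁ hx₁ x₂; simp [hK'def, hpreq x₁ hx₁]
  have hK'per : ∀ x₁ x₂, K' (x₁, x₂ + 1) = K' (x₁, x₂) :=
    fun x₁ x₂ => hKper _ (hprmem x₁) x₂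
  set g₁ : ℝ → ℝ := fun u => g (pr u) with hg₁def
  have hg₁c : Continuous g₁ := hg.continuousOn.comp_continuous hprc hprmem
  have hg₁eq : ∀ u ∈ Icc (0:ℝ) 1, g₁ u = g u := fun u hu => by
    simp [hg₁def, hpreq u hu]
  have hg₁cd : ContDiffOn ℝ 1 g₁ (Icc (0:ℝ) 1) := hg.congr hg₁eq
  have hg₁0 : g₁ 0 = 1 := by rw [hg₁eq 0 (left_mem_Icc.2 zero_le_one)]; exact hg0
  have hg₁1 : g₁ 1 = 0 := by rw [hg₁eq 1 (right_mem_Icc.2 zero_le_one)]; exact hg1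
  -- the averaged kernel
  set H : ℝ → ℝ := fun x₂ => ∫ x₁ in (0:ℝ)..1, K' (x₁, x₂) with hHdef
  obtain ⟨M, hM⟩ := (isCompact_Icc.prod isCompact_Icc).exists_bound_of_continuousOn
    (hK'c.continuousOn (s := Icc (0:ℝ) 1 ×ˢ Icc (0:ℝ) 1))
  have hK'bdd : ∀ x₁ ∈ Icc (0:ℝ) 1, ∀ x₂ : ℝ, ‖K' (x₁, x₂)‖ ≤ M := by
    intro x₁ hx₁ x₂
    have hper1 : Function.Periodic (fun y => K' (x₁, y)) 1 := fun y => hK'per x₁ y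
    have h1 : K' (x₁, x₂) = K' (x₁, Int.fract x₂) := by
      have h := hper1.sub_int_mul_eq (x := x₂) (n := ⌊x₂⌋)
      rw [mul_one] at h
      exact h.symm
    rw [h1]
    exact hM _ ⟨hx₁, ⟨Int.fract_nonneg x₂, (Int.fract_lt_one x₂).le⟩⟩
  have hHc : Continuous H := by
    apply intervalIntegral.continuous_of_dominated_interval (bound := fun _ => M)
    · intro x₂
      exact (hK'c.comp (continuous_id.prodMk continuous_const)).aestronglyMeasurable.restrict
    · intro x₂
      refine Eventually.of_forall fun x₁ hx₁ => ?_
      exact hK'bdd x₁ (Ioc_subset_Icc_self (by simpa [uIoc_of_le zero_le_one] using hx₁)) x₂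
    · exact intervalIntegrable_const
    · refine Eventually.of_forall fun x₁ _ => ?_
      exact hK'c.comp (continuous_const.prodMk continuous_id)
  have hHper : Function.Periodic H 1 := by
    intro x₂
    simp only [hHdef]
    congr 1; ext x₁; exact hK'per x₁ x₂
  have hHmean : (∫ x₂ in (0:ℝ)..1, H x₂) = 0 := by
    have hswap := aux_swap_rect (f := K') hK'c zero_le_one zero_le_one
    have h1 : (∫ x₂ in (0:ℝ)..1, H x₂)
        = ∫ x₁ in (0:ℝ)..1, ∫ x₂ in (0:ℝ)..1, K' (x₁, x₂) := hswap.symm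
    have h2 : (∫ x₁ in (0:ℝ)..1, ∫ x₂ in (0:ℝ)..1, K' (x₁, x₂))
        = ∫ x₁ in (0:ℝ)..1, ∫ x₂ in (0:ℝ)..1, K (x₁, x₂) := by
      apply intervalIntegral.integral_congr
      intro x₁ hx₁
      have hx₁' : x₁ ∈ Icc (0:ℝ) 1 := by rwa [uIcc_of_le zero_le_one] at hx₁
      apply intervalIntegral.integral_congr
      intro x₂ _
      show K' (x₁, x₂) = K (x₁, x₂)
      exact hK'eq x₁ hx₁' x₂
    rw [h1, h2]
    exact hKavg
  -- identify the limit value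
  have hvals : (∫ x₁ in (0:ℝ)..1, ∫ x₂ in (0:ℝ)..1, x₂ * K (x₁, x₂))
      = ∫ x₂ in (0:ℝ)..1, x₂ * H x₂ := by
    have hswap := aux_swap_rect (f := fun p : ℝ × ℝ => p.2 * K' p)
      (continuous_snd.mul hK'c) zero_le_one zero_le_one
    have h1 : (∫ x₁ in (0:ℝ)..1, ∫ x₂ in (0:ℝ)..1, x₂ * K (x₁, x₂))
        = ∫ x₁ in (0:ℝ)..1, ∫ x₂ in (0:ℝ)..1, x₂ * K' (x₁, x₂) := by
      apply intervalIntegral.integral_congr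
      intro x₁ hx₁
      have hx₁' : x₁ ∈ Icc (0:ℝ) 1 := by rwa [uIcc_of_le zero_le_one] at hx₁
      apply intervalIntegral.integral_congr
      intro x₂ _
      show x₂ * K (x₁, x₂) = x₂ * K' (x₁, x₂)
      rw [hK'eq x₁ hx₁' x₂]
    rw [h1]
    rw [hswap]
    apply intervalIntegral.integral_congr
    intro x₂ _
    show (∫ x₁ in (0:ℝ)..1, x₂ * K' (x₁, x₂)) = x₂ * ∫ x₁ in (0:ℝ)..1, K' (x₁, x₂)
    exact intervalIntegral.integral_const_mul _ _
  rw [hvals]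
  have hcore := aux_core hHc hHper hHmean hg₁cd hg₁0 hg₁1
  apply hcore.congr'
  filter_upwards [eventually_gt_atTop (0:ℝ)] with L hL
  -- transform the `g₁, H` integral into the original double integral
  have hswap := aux_swap_rect (f := fun p : ℝ × ℝ => g₁ (p.2 / L) * K' p)
    ((hg₁c.comp (continuous_snd.div_const L)).mul hK'c) zero_le_one hL.le
  have h1 : (∫ t in (0:ℝ)..L, g₁ (t / L) * H t)
      = ∫ x₂ in (0:ℝ)..L, ∫ x₁ in (0:ℝ)..1, g₁ (x₂ / L) * K' (x₁, x₂) := by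
    apply intervalIntegral.integral_congr
    intro x₂ _
    show g₁ (x₂ / L) * (∫ x₁ in (0:ℝ)..1, K' (x₁, x₂))
        = ∫ x₁ in (0:ℝ)..1, g₁ (x₂ / L) * K' (x₁, x₂)
    exact (intervalIntegral.integral_const_mul _ _).symm
  have h2 : (∫ x₁ in (0:ℝ)..1, ∫ x₂ in (0:ℝ)..L, g₁ (x₂ / L) * K' (x₁, x₂))
      = ∫ x₁ in (0:ℝ)..1, ∫ x₂ in (0:ℝ)..L, g (x₂ / L) * K (x₁, x₂) := by
    apply intervalIntegral.integral_congr
    intro x₁ hx₁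
    have hx₁' : x₁ ∈ Icc (0:ℝ) 1 := by rwa [uIcc_of_le zero_le_one] at hx₁
    apply intervalIntegral.integral_congr
    intro x₂ hx₂
    have hx₂' : x₂ ∈ Icc (0:ℝ) L := by rwa [uIcc_of_le hL.le] at hx₂
    have hdiv : x₂ / L ∈ Icc (0:ℝ) 1 :=
      ⟨div_nonneg hx₂'.1 hL.le, (div_le_one hL).2 hx₂'.2⟩
    show g₁ (x₂ / L) * K' (x₁, x₂) = g (x₂ / L) * K (x₁, x₂)
    rw [hg₁eq _ hdiv, hK'eq x₁ hx₁' x₂]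
  rw [h1, ← hswap, h2]
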